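/- Let K be a nonzero closed convex cone in H(M_A,M_B) satisfying CP_B∘K∘CP_A ⊆ K, and suppose there exists a map φ ∈ K with Tr(C_φ) > 0. Then SP_1 ⊆ K, i.e., every Hermitian-preserving map whose Choi matrix is separable belongs to K. -/

import Mathlib

open Matrix Finset
open scoped ComplexOrder Kronecker

/-- The algebra of `n × n` complex matrices. -/
abbrev Mat (n : ℕ) := Matrix (Fin n) (Fin n) ℂ

/-- Linear maps between matrix algebras. -/
abbrev MMap (m n : ℕ) := Mat m →ₗ[ℂ] Mat n

/-- The bilinear pairing `⟨a,b⟩ = Tr(aᵀ b)`. -/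
noncomputable def mpair {ι : Type*} [Fintype ι] (x y : Matrix ι ι ℂ) : ℂ :=
  (xᵀ * y).trace

/-- The Choi matrix `C_φ = Σ_{i,j} e_{ij} ⊗ φ(e_{ij})`. -/
noncomputable def choi {m n : ℕ} (φ : MMap m n) :
    Matrix (Fin m × Fin n) (Fin m × Fin n) ℂ :=
  Matrix.of fun p q => φ (Matrix.single p.1 q.1 1) p.2 q.2

/-- The pairing on maps `⟨φ,ψ⟩ = ⟨C_φ, C_ψ⟩`. -/
noncomputable def mapPair {m n : ℕ} (φ ψ : MMap m n) : ℂ := mpair (choi φ) (choi ψ)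

/-- The adjoint `φ*` with respect to the pairing `⟨a,b⟩ = Tr(aᵀ b)`:
it satisfies `⟨φ(a),b⟩ = ⟨a,φ*(b)⟩`. -/
noncomputable def adjMap {m n : ℕ} (φ : MMap m n) : MMap n m where
  toFun y := Matrix.of fun i j => mpair (φ (Matrix.single i j 1)) y
  map_add' y z := by
    ext i j
    simp [mpair, Matrix.mul_add]
  map_smul' c y := by
    ext i j
    simp [mpair, Matrix.mul_smul]

/-- Hermitian-preserving maps: `φ(a*) = φ(a)*`. -/
def IsHermP {m n : ℕ} (φ : MMap m n) : Prop := ∀ x : Mat m, φ xᴴ = (φ x)ᴴ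

/-- The real vector space `H(M_A,M_B)` of Hermitian-preserving maps, as a set. -/
def HermSet (m n : ℕ) : Set (MMap m n) := {φ | IsHermP φ}

/-- Positive maps: mapping positive semidefinite matrices to positive semidefinite ones. -/
def IsPosMap {m n : ℕ} (φ : MMap m n) : Prop :=
  ∀ x : Mat m, x.PosSemidef → (φ x).PosSemidef

/-- Completely positive maps: those whose Choi matrix is positive semidefinite. -/
def IsCP {m n : ℕ} (φ : MMap m n) : Prop := (choi φ).PosSemidef

/-- The cone `CP` of completely positive maps. -/
def CPset (m n : ℕ) : Set (MMap m n) := {φ | IsCP φ}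

/-- `K₁ ∘ K₀ = {φ₁ ∘ φ₀ : φ₁ ∈ K₁, φ₀ ∈ K₀}`. -/
def compSet {m n p : ℕ} (K1 : Set (MMap n p)) (K0 : Set (MMap m n)) : Set (MMap m p) :=
  {χ | ∃ φ₁ ∈ K1, ∃ φ₀ ∈ K0, χ = φ₁ ∘ₗ φ₀}

/-- `K₂ ∘ K₁ ∘ K₀ = {φ₂ ∘ φ₁ ∘ φ₀ : φᵢ ∈ Kᵢ}`. -/
def comp3 {m n p q : ℕ} (K2 : Set (MMap p q)) (K1 : Set (MMap n p)) (K0 : Set (MMap m n)) :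
    Set (MMap m q) :=
  {χ | ∃ φ₂ ∈ K2, ∃ φ₁ ∈ K1, ∃ φ₀ ∈ K0, χ = φ₂ ∘ₗ φ₁ ∘ₗ φ₀}

/-- The dual cone `K° = {ψ ∈ H(M_A,M_B) : ⟨φ,ψ⟩ ≥ 0 for all φ ∈ K}`. -/
def dualCone {m n : ℕ} (K : Set (MMap m n)) : Set (MMap m n) :=
  {ψ | IsHermP ψ ∧ ∀ φ ∈ K, 0 ≤ mapPair φ ψ}

/-- `K* = {φ* : φ ∈ K}`. -/
noncomputable def starSet {m n : ℕ} (K : Set (MMap m n)) : Set (MMap n m) := adjMap '' K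

/-- `K^⊳ = (K ∘ CP_A)°`. -/
def rdualSet {m n : ℕ} (K : Set (MMap m n)) : Set (MMap m n) :=
  dualCone (compSet K (CPset m m))

/-- `K^⊲ = (CP_B ∘ K)°`. -/
def ldualSet {m n : ℕ} (K : Set (MMap m n)) : Set (MMap m n) :=
  dualCone (compSet (CPset n n) K)

/-- A convex cone of maps: closed under addition and nonnegative real scaling. -/
def IsConeSet {m n : ℕ} (K : Set (MMap m n)) : Prop :=
  (∀ φ ∈ K, ∀ ψ ∈ K, φ + ψ ∈ K) ∧ (∀ φ ∈ K, ∀ r : ℝ, 0 ≤ r → (r : ℂ) • φ ∈ K)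

/-- A closed convex cone of maps (closedness via the Choi isomorphism). -/
def IsClosedConeSet {m n : ℕ} (K : Set (MMap m n)) : Prop :=
  IsConeSet K ∧ IsClosed (choi '' K)

/-- Ampliation `1_Z ⊗ σ : M_Z ⊗ M_X → M_Z ⊗ M_Y`. -/
def idTensor {z x y : ℕ} (σ : MMap x y)
    (M : Matrix (Fin z × Fin x) (Fin z × Fin x) ℂ) :
    Matrix (Fin z × Fin y) (Fin z × Fin y) ℂ :=
  Matrix.of fun p q => σ (Matrix.of fun k l => M (p.1, k) (q.1, l)) p.2 q.2

/-- Ampliation `σ ⊗ 1_Z : M_X ⊗ M_Z → M_Y ⊗ M_Z`. -/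
def tensorId {x y z : ℕ} (σ : MMap x y)
    (M : Matrix (Fin x × Fin z) (Fin x × Fin z) ℂ) :
    Matrix (Fin y × Fin z) (Fin y × Fin z) ℂ :=
  Matrix.of fun p q => σ (Matrix.of fun i j => M (i, p.2) (j, q.2)) p.1 q.1

/-- `S_1`: the closed convex cone generated by `x ⊗ y` with `x, y` positive semidefinite. -/
def SepCone (m n : ℕ) : Set (Matrix (Fin m × Fin n) (Fin m × Fin n) ℂ) :=
  closure {X | ∃ (r : ℕ) (x : Fin r → Mat m) (y : Fin r → Mat n),
    (∀ i, (x i).PosSemidef ∧ (y i).PosSemidef) ∧ X = ∑ i, x i ⊗ₖ y i}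

/-- `SP_1`: Hermitian-preserving maps with separable Choi matrix. -/
def SP1set (m n : ℕ) : Set (MMap m n) := {φ | IsHermP φ ∧ choi φ ∈ SepCone m n}


/-- Vectors of Schmidt rank at most `k`. -/
def SchmidtRankLE (k : ℕ) {m n : ℕ} (ξ : Fin m × Fin n → ℂ) : Prop :=
  ∃ (u : Fin k → Fin m → ℂ) (v : Fin k → Fin n → ℂ),
    ξ = fun p => ∑ i, u i p.1 * v i p.2

/-- `k`-blockpositive matrices: `⟨Y, |ξ⟩⟨ξ|⟩ ≥ 0` for every `ξ` of Schmidt rank at most `k`. -/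
def BlockPos (k : ℕ) {m n : ℕ} (Y : Matrix (Fin m × Fin n) (Fin m × Fin n) ℂ) : Prop :=
  ∀ ξ : Fin m × Fin n → ℂ, SchmidtRankLE k ξ →
    0 ≤ mpair Y (Matrix.of fun p q => ξ p * star (ξ q))

/-- `S_k`: the closed convex cone generated by `|ξ⟩⟨ξ|` for `ξ` of Schmidt rank at most `k`. -/
def SchmidtCone (k m n : ℕ) : Set (Matrix (Fin m × Fin n) (Fin m × Fin n) ℂ) :=
  closure {X | ∃ (r : ℕ) (ξ : Fin r → Fin m × Fin n → ℂ),
    (∀ i, SchmidtRankLE k (ξ i)) ∧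
    X = ∑ i, Matrix.of fun p q => ξ i p * star (ξ i q)}

/-- `k`-positive maps: the ampliation `1_{M_k} ⊗ φ` is a positive map. -/
def IsKPos (k : ℕ) {m n : ℕ} (φ : MMap m n) : Prop :=
  ∀ X : Matrix (Fin k × Fin m) (Fin k × Fin m) ℂ, X.PosSemidef → (idTensor φ X).PosSemidef

/-- The transpose map as a linear map. -/
def tmap (m : ℕ) : MMap m m where
  toFun x := xᵀ
  map_add' x y := by simp [Matrix.transpose_add]
  map_smul' c x := by simp [Matrix.transpose_smul]

/-- Completely copositive maps: `CCP = {φ ∘ t : φ ∈ CP}`. -/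
def CCPset (m : ℕ) : Set (MMap m m) := {χ | ∃ φ, IsCP φ ∧ χ = φ ∘ₗ tmap m}

/-- PPT maps: `PPT = CP ∩ CCP`. -/
def PPTset (m : ℕ) : Set (MMap m m) := CPset m m ∩ CCPset m

/-- Decomposable maps: the convex hull of `CP` and `CCP`. -/
noncomputable def DECset (m : ℕ) : Set (MMap m m) := convexHull ℝ (CPset m m ∪ CCPset m)

/-- The cone `P_1` of positive maps. -/
def P1set (m n : ℕ) : Set (MMap m n) := {φ | IsPosMap φ}

/-- A right-mapping cone: a closed convex cone of positive (Hermitian-preserving) maps `L`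
with `L ∘ CP_A ⊆ L`. -/
def IsRMC {m n : ℕ} (L : Set (MMap m n)) : Prop :=
  L ⊆ HermSet m n ∧ (∀ φ ∈ L, IsPosMap φ) ∧ IsClosedConeSet L ∧
    compSet L (CPset m m) ⊆ L

/-- A left-mapping cone: a closed convex cone of positive (Hermitian-preserving) maps `L`
with `CP_B ∘ L ⊆ L`. -/
def IsLMC {m n : ℕ} (L : Set (MMap m n)) : Prop :=
  L ⊆ HermSet m n ∧ (∀ φ ∈ L, IsPosMap φ) ∧ IsClosedConeSet L ∧
    compSet (CPset n n) L ⊆ L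


noncomputable def phiXY {a b : ℕ} (x : Mat a) (y : Mat b) : MMap a b where
  toFun z := (xᵀ * z).trace • y
  map_add' z w := by simp [Matrix.mul_add, add_smul]
  map_smul' c z := by simp [Matrix.mul_smul, smul_smul]

lemma phiXY_apply {a b : ℕ} (x : Mat a) (y : Mat b) (z : Mat a) :
    phiXY x y z = (xᵀ * z).trace • y := rfl

lemma trace_transpose_mul_stdBasisMatrix {m : ℕ} (x : Mat m) (i j : Fin m) :
    (xᵀ * Matrix.single i j 1).trace = x i j := by
  simp [Matrix.trace, Matrix.diag, Matrix.mul_apply, Matrix.single,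
    Matrix.of_apply, ite_and, Finset.sum_ite_eq]

lemma choi_phiXY {a b : ℕ} (x : Mat a) (y : Mat b) : choi (phiXY x y) = x ⊗ₖ y := by
  ext p q
  simp [choi, phiXY_apply, trace_transpose_mul_stdBasisMatrix]

lemma kron_psd {m n : ℕ} {x : Mat m} {y : Mat n} (hx : x.PosSemidef) (hy : y.PosSemidef) :
    (x ⊗ₖ y).PosSemidef := by
  exact Matrix.PosSemidef.kronecker hx hy

lemma choi_sum {a b : ℕ} {r : ℕ} (f : Fin r → MMap a b) :
    choi (∑ i, f i) = ∑ i, choi (f i) := by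
  ext p q
  simp [choi, LinearMap.sum_apply, Matrix.sum_apply]

lemma choi_inj {a b : ℕ} : Function.Injective (choi (m := a) (n := b)) := by
  intro φ ψ h
  apply LinearMap.ext
  intro z
  rw [Matrix.matrix_eq_sum_single z, map_sum, map_sum]
  refine Finset.sum_congr rfl fun i _ => ?_
  rw [map_sum, map_sum]
  refine Finset.sum_congr rfl fun j _ => ?_
  have hsm : Matrix.single i j (z i j) = (z i j) • Matrix.single i j (1 : ℂ) := by
    ext k l
    simp [Matrix.single, Matrix.of_apply, mul_ite, mul_one, mul_zero]
  rw [hsm, LinearMap.map_smul, LinearMap.map_smul]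
  congr 1
  ext k l
  exact congrFun (congrFun h (i, k)) (j, l)

lemma trace_choi {a b : ℕ} (φ : MMap a b) : (choi φ).trace = (φ 1).trace := by
  have h1 : (1 : Mat a) = ∑ i : Fin a, Matrix.single i i (1 : ℂ) := by
    ext k l
    simp [Matrix.single, Matrix.one_apply, Matrix.sum_apply, ite_and,
      Finset.sum_ite_eq]
  rw [h1, map_sum]
  simp only [Matrix.trace, Matrix.diag, choi, Matrix.of_apply, Matrix.sum_apply,
    Fintype.sum_prod_type]
  exact Finset.sum_comm

lemma comp_eq {a b : ℕ} (φ₀ : MMap a b) (x : Mat a) (y : Mat b) :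
    phiXY (1 : Mat b) y ∘ₗ φ₀ ∘ₗ phiXY x (1 : Mat a) = (φ₀ 1).trace • phiXY x y := by
  apply LinearMap.ext
  intro z
  simp only [LinearMap.comp_apply, phiXY_apply, LinearMap.map_smul, LinearMap.smul_apply,
    Matrix.transpose_one, Matrix.one_mul, Matrix.trace_smul, smul_eq_mul, smul_smul]
  rw [mul_comm]

lemma K_sum_mem {a b : ℕ} {K : Set (MMap a b)} (hadd : ∀ φ ∈ K, ∀ ψ ∈ K, φ + ψ ∈ K)
    (h0 : (0 : MMap a b) ∈ K) :
    ∀ (r : ℕ) (f : Fin r → MMap a b), (∀ i, f i ∈ K) → (∑ i, f i) ∈ K := by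
  intro r
  induction r with
  | zero => intro f _; simpa using h0
  | succ n ih =>
    intro f hf
    rw [Fin.sum_univ_succ]
    exact hadd _ (hf 0) _ (ih _ fun i => hf i.succ)

/-- a nonzero closed convex cone `K` with `CP_B∘K∘CP_A ⊆ K` containing a map
whose Choi matrix has positive trace contains all of `SP_1`. -/
theorem stmt10 {a b : ℕ} (K : Set (MMap a b))
    (hH : K ⊆ HermSet a b) (hK : IsClosedConeSet K) (hne : K ≠ {0})
    (hmc : comp3 (CPset b b) K (CPset a a) ⊆ K)
    (htr : ∃ φ ∈ K, 0 < (choi φ).trace) :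
    SP1set a b ⊆ K := by
  obtain ⟨φ₀, hφ₀K, hφ₀tr⟩ := htr
  set t := (choi φ₀).trace with ht
  obtain ⟨htre, htim⟩ := Complex.lt_def.mp hφ₀tr
  simp only [Complex.zero_re, Complex.zero_im] at htre htim
  have hteq : t = (t.re : ℂ) := by
    apply Complex.ext <;> simp [← htim]
  have h0K : (0 : MMap a b) ∈ K := by
    have := hK.1.2 φ₀ hφ₀K 0 le_rfl
    simpa using this
  have key : ∀ (x : Mat a) (y : Mat b), x.PosSemidef → y.PosSemidef → phiXY x y ∈ K := by
    intro x y hx hy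
    have hcomp : phiXY (1 : Mat b) y ∘ₗ φ₀ ∘ₗ phiXY x (1 : Mat a) ∈ K := by
      apply hmc
      refine ⟨phiXY (1 : Mat b) y, ?_, φ₀, hφ₀K, phiXY x (1 : Mat a), ?_, rfl⟩
      · show IsCP _
        rw [IsCP, choi_phiXY]
        exact kron_psd Matrix.PosSemidef.one hy
      · show IsCP _
        rw [IsCP, choi_phiXY]
        exact kron_psd hx Matrix.PosSemidef.one
    rw [comp_eq] at hcomp
    have htt : (φ₀ (1 : Mat a)).trace = t := (trace_choi φ₀).symm
    rw [htt] at hcomp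
    have hmem := hK.1.2 _ hcomp (t.re)⁻¹ (inv_nonneg.mpr htre.le)
    have hscal : ((((t.re)⁻¹ : ℝ) : ℂ)) • (t • phiXY x y) = phiXY x y := by
      rw [smul_smul, hteq]
      norm_cast
      rw [inv_mul_cancel₀ (ne_of_gt htre)]
      simp
    rwa [hscal] at hmem
  intro φ hφ
  obtain ⟨hφH, hφsep⟩ := hφ
  have hset : {X : Matrix (Fin a × Fin b) (Fin a × Fin b) ℂ |
      ∃ (r : ℕ) (x : Fin r → Mat a) (y : Fin r → Mat b),
        (∀ i, (x i).PosSemidef ∧ (y i).PosSemidef) ∧ X = ∑ i, x i ⊗ₖ y i} ⊆ choi '' K := by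
    rintro X ⟨r, x, y, hxy, rfl⟩
    refine ⟨∑ i, phiXY (x i) (y i),
      K_sum_mem hK.1.1 h0K r _ (fun i => key _ _ (hxy i).1 (hxy i).2), ?_⟩
    rw [choi_sum]
    exact Finset.sum_congr rfl fun i _ => choi_phiXY _ _
  have hcl : choi φ ∈ choi '' K := closure_minimal hset hK.2 hφsep
  obtain ⟨ψ, hψK, hψ⟩ := hcl
  rwa [choi_inj hψ] at hψK
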